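/- Let U ⊆ ℝ⁴ be open and convex with coordinates (u,v,x,y), and let τ₀, τ₁ : U → ℂ be smooth with ∂_u τ₀ = 0, ∂_ζ̄ τ₁ = 0, and ∂_u τ₁ − ∂_ζ̄ τ₀ = 0 on U. Then there exist smooth functions p, q₀, q₁ : U → ℂ, each annihilated by both ∂_u and ∂_ζ̄ (i.e. depending only on (v,ζ)), such that τ₀ = p·ζ̄ + q₀ and τ₁ = p·u + q₁, where ζ̄ = (x − iy)/√2 is regarded as a function on U. -/

import Mathlib

/- Coordinates (u,v,x,y) = indices (0,1,2,3) on ℝ⁴;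
   ζ = (x+iy)/√2, ∂_ζ = (∂_x − i∂_y)/√2, ∂_ζ̄ = (∂_x + i∂_y)/√2. -/

noncomputable section

abbrev V4 : Type := Fin 4 → ℝ

/-- Partial derivative of a complex-valued function in coordinate direction `i`. -/
def pdC (i : Fin 4) (f : V4 → ℂ) : V4 → ℂ :=
  fun x => fderiv ℝ f x (Pi.single i 1)

/-- Partial derivative of a real-valued function in coordinate direction `i`. -/
def pdR (i : Fin 4) (f : V4 → ℝ) : V4 → ℝ :=
  fun x => fderiv ℝ f x (Pi.single i 1)

/-- Wirtinger derivative ∂_ζ = (∂_x - i ∂_y)/√2. -/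
def pdZ (f : V4 → ℂ) : V4 → ℂ :=
  fun x => (pdC 2 f x - Complex.I * pdC 3 f x) / (Real.sqrt 2 : ℂ)

/-- Wirtinger derivative ∂_ζ̄ = (∂_x + i ∂_y)/√2. -/
def pdZb (f : V4 → ℂ) : V4 → ℂ :=
  fun x => (pdC 2 f x + Complex.I * pdC 3 f x) / (Real.sqrt 2 : ℂ)

/-- The coordinate function ζ = (x+iy)/√2. -/
def zeta (x : V4) : ℂ := ((x 2 : ℂ) + Complex.I * (x 3 : ℂ)) / (Real.sqrt 2 : ℂ)

/-- The coordinate function ζ̄ = (x−iy)/√2. -/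
def zbar (x : V4) : ℂ := ((x 2 : ℂ) - Complex.I * (x 3 : ℂ)) / (Real.sqrt 2 : ℂ)

/- ### Auxiliary lemmas -/

lemma sqrt2C_ne : ((Real.sqrt 2 : ℝ) : ℂ) ≠ 0 := by
  simp only [ne_eq, Complex.ofReal_eq_zero]
  positivity

lemma sqrt2C_sq : ((Real.sqrt 2 : ℝ) : ℂ) * ((Real.sqrt 2 : ℝ) : ℂ) = 2 := by
  have : Real.sqrt 2 * Real.sqrt 2 = 2 := Real.mul_self_sqrt (by norm_num)
  exact_mod_cast congrArg (fun t : ℝ => (t : ℂ)) this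

lemma one_le_inf : (1 : WithTop ℕ∞) ≤ ((⊤:ℕ∞) : WithTop ℕ∞) := by norm_num
lemma two_le_inf : (2 : WithTop ℕ∞) ≤ ((⊤:ℕ∞) : WithTop ℕ∞) := WithTop.coe_le_coe.mpr le_top
lemma inf_add_one_le : ((⊤:ℕ∞) : WithTop ℕ∞) + 1 ≤ ((⊤:ℕ∞) : WithTop ℕ∞) := by norm_num

lemma contDiffOn_pdC {f : V4 → ℂ} {U : Set V4} (hU : IsOpen U)
    (hf : ContDiffOn ℝ (⊤:ℕ∞) f U) (j : Fin 4) :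
    ContDiffOn ℝ (⊤:ℕ∞) (pdC j f) U :=
  (hf.fderiv_of_isOpen hU le_rfl).clm_apply contDiffOn_const

lemma differentiableAt_pdC {f : V4 → ℂ} {U : Set V4} (hU : IsOpen U)
    (hf : ContDiffOn ℝ (⊤:ℕ∞) f U) {x : V4} (hx : x ∈ U) (j : Fin 4) :
    DifferentiableAt ℝ (pdC j f) x :=
  ((contDiffOn_pdC hU hf j).contDiffAt (hU.mem_nhds hx)).differentiableAt (by simp)

lemma differentiableAt_of_contDiffOn {f : V4 → ℂ} {U : Set V4} (hU : IsOpen U)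
    (hf : ContDiffOn ℝ (⊤:ℕ∞) f U) {x : V4} (hx : x ∈ U) :
    DifferentiableAt ℝ f x :=
  (hf.contDiffAt (hU.mem_nhds hx)).differentiableAt (by simp)

/-- Mixed partial derivatives commute for smooth functions on an open set. -/
lemma pdC_comm {f : V4 → ℂ} {U : Set V4} (hU : IsOpen U)
    (hf : ContDiffOn ℝ (⊤:ℕ∞) f U) {x : V4} (hx : x ∈ U) (i j : Fin 4) :
    pdC i (pdC j f) x = pdC j (pdC i f) x := by
  have hmem := hU.mem_nhds hx
  have hd : DifferentiableAt ℝ (fderiv ℝ f) x :=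
    ((hf.fderiv_of_isOpen hU (m := (⊤:ℕ∞)) le_rfl).contDiffAt hmem).differentiableAt
      (by simp)
  have key : ∀ v w : V4, fderiv ℝ (fun y => fderiv ℝ f y v) x w
      = fderiv ℝ (fderiv ℝ f) x w v := by
    intro v w
    rw [fderiv_clm_apply hd (differentiableAt_const v)]
    simp
  have hsym : IsSymmSndFDerivAt ℝ f x :=
    (hf.contDiffAt hmem).isSymmSndFDerivAt
      (by rw [minSmoothness_of_isRCLikeNormedField]; exact two_le_inf)
  show fderiv ℝ (fun y => fderiv ℝ f y (Pi.single j 1)) x (Pi.single i 1)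
      = fderiv ℝ (fun y => fderiv ℝ f y (Pi.single i 1)) x (Pi.single j 1)
  rw [key, key]
  exact hsym _ _

/-- Partial derivative of a linear combination `(A + d·B)/c`. -/
lemma pdC_combo {A B : V4 → ℂ} {x : V4} (hA : DifferentiableAt ℝ A x)
    (hB : DifferentiableAt ℝ B x) (c d : ℂ) (i : Fin 4) :
    pdC i (fun y => (A y + d * B y) / c) x = (pdC i A x + d * pdC i B x) / c := by
  have h : (fun y => (A y + d * B y) / c) = fun y => c⁻¹ * (A y + d * B y) := by
    funext y; rw [div_eq_inv_mul]
  show fderiv ℝ (fun y => (A y + d * B y) / c) x (Pi.single i 1) = _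
  rw [h, fderiv_const_mul (hA.fun_add (hB.const_mul d)), fderiv_fun_add hA (hB.const_mul d),
    fderiv_const_mul hB d]
  simp only [ContinuousLinearMap.coe_smul', Pi.smul_apply, ContinuousLinearMap.add_apply,
    smul_eq_mul]
  rw [div_eq_inv_mul]
  rfl

/-- Linearity: a partial of `pdZb g`. -/
lemma pdC_pdZb {g : V4 → ℂ} {U : Set V4} (hU : IsOpen U)
    (hg : ContDiffOn ℝ (⊤:ℕ∞) g U) {x : V4} (hx : x ∈ U) (i : Fin 4) :
    pdC i (pdZb g) x
      = (pdC i (pdC 2 g) x + Complex.I * pdC i (pdC 3 g) x) / (Real.sqrt 2 : ℂ) := by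
  have h2 := differentiableAt_pdC hU hg hx 2
  have h3 := differentiableAt_pdC hU hg hx 3
  exact pdC_combo h2 h3 _ _ i

lemma pdC_mul {f g : V4 → ℂ} {x : V4} (hf : DifferentiableAt ℝ f x)
    (hg : DifferentiableAt ℝ g x) (i : Fin 4) :
    pdC i (fun y => f y * g y) x = f x * pdC i g x + g x * pdC i f x := by
  show fderiv ℝ (fun y => f y * g y) x (Pi.single i 1) = _
  rw [fderiv_fun_mul hf hg]
  simp only [ContinuousLinearMap.add_apply, ContinuousLinearMap.coe_smul', Pi.smul_apply,
    smul_eq_mul]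
  rfl

lemma pdC_sub {f g : V4 → ℂ} {x : V4} (hf : DifferentiableAt ℝ f x)
    (hg : DifferentiableAt ℝ g x) (i : Fin 4) :
    pdC i (fun y => f y - g y) x = pdC i f x - pdC i g x := by
  show fderiv ℝ (fun y => f y - g y) x (Pi.single i 1) = _
  rw [fderiv_fun_sub hf hg]
  rfl

lemma pdC_congr_nhds {f g : V4 → ℂ} {x : V4} (h : f =ᶠ[nhds x] g) (i : Fin 4) :
    pdC i f x = pdC i g x := by
  show fderiv ℝ f x (Pi.single i 1) = fderiv ℝ g x (Pi.single i 1)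
  rw [h.fderiv_eq]

lemma pdC_zero_of_eventually {f : V4 → ℂ} {x : V4} (h : f =ᶠ[nhds x] fun _ => 0)
    (i : Fin 4) : pdC i f x = 0 := by
  rw [pdC_congr_nhds h i]
  show fderiv ℝ (fun _ : V4 => (0:ℂ)) x (Pi.single i 1) = 0
  rw [fderiv_fun_const]
  rfl

lemma coordC_hasFDeriv (i : Fin 4) (x : V4) :
    HasFDerivAt (fun y : V4 => (y i : ℂ))
      (Complex.ofRealCLM.comp (ContinuousLinearMap.proj i)) x :=
  (Complex.ofRealCLM.comp (ContinuousLinearMap.proj i : V4 →L[ℝ] ℝ)).hasFDerivAt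

lemma differentiableAt_coordC (i : Fin 4) (x : V4) :
    DifferentiableAt ℝ (fun y : V4 => (y i : ℂ)) x :=
  (coordC_hasFDeriv i x).differentiableAt

lemma pdC_coord (i j : Fin 4) (x : V4) :
    pdC j (fun y : V4 => (y i : ℂ)) x = if i = j then 1 else 0 := by
  show fderiv ℝ (fun y : V4 => (y i : ℂ)) x (Pi.single j 1) = _
  rw [(coordC_hasFDeriv i x).fderiv]
  simp [Pi.single_apply]
  split_ifs <;> simp

lemma contDiff_coordC (i : Fin 4) : ContDiff ℝ (⊤:ℕ∞) (fun y : V4 => (y i : ℂ)) :=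
  (Complex.ofRealCLM.comp (ContinuousLinearMap.proj i : V4 →L[ℝ] ℝ)).contDiff

lemma contDiff_zbar : ContDiff ℝ (⊤:ℕ∞) zbar := by
  unfold zbar
  exact ((contDiff_coordC 2).sub (contDiff_const.mul (contDiff_coordC 3))).div_const _

lemma zbar_eq : zbar = fun y : V4 =>
    ((y 2 : ℂ) + (-Complex.I) * (y 3 : ℂ)) / (Real.sqrt 2 : ℂ) := by
  funext y
  unfold zbar
  ring

lemma pdC_zbar (j : Fin 4) (x : V4) :
    pdC j zbar x = ((if (2:Fin 4) = j then (1:ℂ) else 0)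
      + (-Complex.I) * (if (3:Fin 4) = j then (1:ℂ) else 0)) / (Real.sqrt 2 : ℂ) := by
  rw [zbar_eq]
  rw [pdC_combo (differentiableAt_coordC 2 x) (differentiableAt_coordC 3 x)]
  rw [pdC_coord, pdC_coord]

lemma pdC0_zbar (x : V4) : pdC 0 zbar x = 0 := by
  rw [pdC_zbar, if_neg (by decide), if_neg (by decide)]
  simp

lemma pdZb_zbar (x : V4) : pdZb zbar x = 1 := by
  unfold pdZb
  rw [pdC_zbar, pdC_zbar, if_pos rfl, if_neg (by decide), if_neg (by decide), if_pos rfl]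
  have hs := sqrt2C_ne
  have hs2 := sqrt2C_sq
  have hI := Complex.I_mul_I
  field_simp
  linear_combination -hs2 - hI

lemma pdC2_zbar (x : V4) : pdC 2 zbar x = 1 / (Real.sqrt 2 : ℂ) := by
  rw [pdC_zbar, if_pos rfl, if_neg (by decide)]
  ring

lemma pdC3_zbar (x : V4) : pdC 3 zbar x = -Complex.I / (Real.sqrt 2 : ℂ) := by
  rw [pdC_zbar, if_neg (by decide), if_pos rfl]
  ring

lemma algebra0 (a2 a3 b2 b3 P Z s : ℂ) (hs : s ≠ 0) (hs2 : s * s = 2)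
    (hτ : (a2 + Complex.I * a3) / s = P) (hp : (b2 + Complex.I * b3) / s = 0) :
    ((a2 - (P * (1 / s) + Z * b2)) + Complex.I * (a3 - (P * (-Complex.I / s) + Z * b3))) / s
      = 0 := by
  rw [div_eq_iff hs] at hτ hp
  rw [zero_mul] at hp
  have h1s : 1 / s = s / 2 := by
    rw [div_eq_div_iff hs (by norm_num : (2:ℂ) ≠ 0)]
    linear_combination -hs2
  have h2s : -Complex.I / s = -Complex.I * s / 2 := by
    rw [div_eq_div_iff hs (by norm_num : (2:ℂ) ≠ 0)]
    linear_combination Complex.I * hs2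
  rw [h1s, h2s, div_eq_iff hs, zero_mul]
  have hI := Complex.I_mul_I
  linear_combination hτ - Z * hp + (P * s / 2) * hI

lemma algebra1 (c2 c3 b2 b3 u Z s : ℂ) (hs : s ≠ 0)
    (hτ : (c2 + Complex.I * c3) / s = 0) (hp : (b2 + Complex.I * b3) / s = 0) :
    ((c2 - (Z * 0 + u * b2)) + Complex.I * (c3 - (Z * 0 + u * b3))) / s = 0 := by
  rw [div_eq_iff hs, zero_mul] at hτ hp
  rw [div_eq_iff hs, zero_mul]
  linear_combination hτ - u * hp

/-- The kernel of the symmetrized operator ∂̃_{(A'}τ_{B')}: solutions are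
τ₀ = p·ζ̄ + q₀, τ₁ = p·u + q₁ with p, q₀, q₁ functions of (v,ζ) only. -/
theorem stmt10 (U : Set V4) (hUopen : IsOpen U) (hUconv : Convex ℝ U)
    (τ0 τ1 : V4 → ℂ)
    (h0 : ContDiffOn ℝ (⊤ : ℕ∞) τ0 U) (h1 : ContDiffOn ℝ (⊤ : ℕ∞) τ1 U)
    (e1 : ∀ x ∈ U, pdC 0 τ0 x = 0)
    (e2 : ∀ x ∈ U, pdZb τ1 x = 0)
    (e3 : ∀ x ∈ U, pdC 0 τ1 x - pdZb τ0 x = 0) :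
    ∃ p q0 q1 : V4 → ℂ,
      ContDiffOn ℝ (⊤ : ℕ∞) p U ∧ ContDiffOn ℝ (⊤ : ℕ∞) q0 U ∧
      ContDiffOn ℝ (⊤ : ℕ∞) q1 U ∧
      (∀ x ∈ U, pdC 0 p x = 0 ∧ pdZb p x = 0) ∧
      (∀ x ∈ U, pdC 0 q0 x = 0 ∧ pdZb q0 x = 0) ∧
      (∀ x ∈ U, pdC 0 q1 x = 0 ∧ pdZb q1 x = 0) ∧
      (∀ x ∈ U, τ0 x = p x * zbar x + q0 x) ∧
      (∀ x ∈ U, τ1 x = p x * (x 0 : ℂ) + q1 x) := by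
  classical
  set p : V4 → ℂ := pdC 0 τ1 with hp_def
  have hpU : ContDiffOn ℝ (⊤:ℕ∞) p U := contDiffOn_pdC hUopen h1 0
  have hzbarOn : ContDiffOn ℝ (⊤:ℕ∞) zbar U := contDiff_zbar.contDiffOn
  have huOn : ContDiffOn ℝ (⊤:ℕ∞) (fun y : V4 => (y 0 : ℂ)) U :=
    (contDiff_coordC 0).contDiffOn
  -- p kills both derivatives
  have hp0 : ∀ x ∈ U, pdC 0 p x = 0 := by
    intro x hx
    have hmem := hUopen.mem_nhds hx
    have hpe : p =ᶠ[nhds x] pdZb τ0 := by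
      filter_upwards [hmem] with y hy
      have h := e3 y hy
      exact sub_eq_zero.mp h
    rw [pdC_congr_nhds hpe, pdC_pdZb hUopen h0 hx]
    have h2 : pdC 0 (pdC 2 τ0) x = 0 := by
      rw [pdC_comm hUopen h0 hx 0 2]
      exact pdC_zero_of_eventually (by filter_upwards [hmem] with y hy using e1 y hy) 2
    have h3 : pdC 0 (pdC 3 τ0) x = 0 := by
      rw [pdC_comm hUopen h0 hx 0 3]
      exact pdC_zero_of_eventually (by filter_upwards [hmem] with y hy using e1 y hy) 3
    rw [h2, h3]
    simp
  have hpz : ∀ x ∈ U, pdZb p x = 0 := by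
    intro x hx
    have hmem := hUopen.mem_nhds hx
    have hcomb : pdC 0 (pdZb τ1) x = 0 :=
      pdC_zero_of_eventually (by filter_upwards [hmem] with y hy using e2 y hy) 0
    rw [pdC_pdZb hUopen h1 hx 0] at hcomb
    show (pdC 2 p x + Complex.I * pdC 3 p x) / (Real.sqrt 2 : ℂ) = 0
    rw [hp_def, pdC_comm hUopen h1 hx 2 0, pdC_comm hUopen h1 hx 3 0]
    exact hcomb
  refine ⟨p, fun y => τ0 y - p y * zbar y, fun y => τ1 y - p y * (y 0 : ℂ),
    hpU, h0.sub (hpU.mul hzbarOn), h1.sub (hpU.mul huOn),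
    fun x hx => ⟨hp0 x hx, hpz x hx⟩, ?_, ?_, ?_, ?_⟩
  · -- q0 derivatives
    intro x hx
    have hmem := hUopen.mem_nhds hx
    have hdp : DifferentiableAt ℝ p x := differentiableAt_of_contDiffOn hUopen hpU hx
    have hdτ0 : DifferentiableAt ℝ τ0 x := differentiableAt_of_contDiffOn hUopen h0 hx
    have hdzb : DifferentiableAt ℝ zbar x := contDiff_zbar.differentiable (by simp) x
    have key : ∀ i : Fin 4, pdC i (fun y => τ0 y - p y * zbar y) x
        = pdC i τ0 x - (p x * pdC i zbar x + zbar x * pdC i p x) := by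
      intro i
      rw [pdC_sub hdτ0 (hdp.fun_mul hdzb), pdC_mul hdp hdzb]
    constructor
    · rw [key 0, e1 x hx, pdC0_zbar, hp0 x hx]
      ring
    · show (pdC 2 (fun y => τ0 y - p y * zbar y) x
          + Complex.I * pdC 3 (fun y => τ0 y - p y * zbar y) x) / (Real.sqrt 2 : ℂ) = 0
      rw [key 2, key 3, pdC2_zbar, pdC3_zbar]
      have hτ : (pdC 2 τ0 x + Complex.I * pdC 3 τ0 x) / (Real.sqrt 2 : ℂ) = p x := by
        have h := e3 x hx
        have := sub_eq_zero.mp h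
        exact (this.symm : pdZb τ0 x = pdC 0 τ1 x)
      have hp' : (pdC 2 p x + Complex.I * pdC 3 p x) / (Real.sqrt 2 : ℂ) = 0 := hpz x hx
      exact algebra0 _ _ _ _ _ _ _ sqrt2C_ne sqrt2C_sq hτ hp'
  · -- q1 derivatives
    intro x hx
    have hdp : DifferentiableAt ℝ p x := differentiableAt_of_contDiffOn hUopen hpU hx
    have hdτ1 : DifferentiableAt ℝ τ1 x := differentiableAt_of_contDiffOn hUopen h1 hx
    have hdu : DifferentiableAt ℝ (fun y : V4 => (y 0 : ℂ)) x := differentiableAt_coordC 0 x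
    have key : ∀ i : Fin 4, pdC i (fun y => τ1 y - p y * (y 0 : ℂ)) x
        = pdC i τ1 x - (p x * pdC i (fun y : V4 => (y 0 : ℂ)) x + (x 0 : ℂ) * pdC i p x) := by
      intro i
      rw [pdC_sub hdτ1 (hdp.fun_mul hdu), pdC_mul hdp hdu]
    constructor
    · rw [key 0, pdC_coord 0 0, if_pos rfl, hp0 x hx]
      show p x - (p x * 1 + (x 0 : ℂ) * 0) = 0
      ring
    · show (pdC 2 (fun y => τ1 y - p y * (y 0 : ℂ)) x
          + Complex.I * pdC 3 (fun y => τ1 y - p y * (y 0 : ℂ)) x) / (Real.sqrt 2 : ℂ) = 0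
      rw [key 2, key 3, pdC_coord 0 2, pdC_coord 0 3,
        if_neg (by decide), if_neg (by decide)]
      have hτ : (pdC 2 τ1 x + Complex.I * pdC 3 τ1 x) / (Real.sqrt 2 : ℂ) = 0 := e2 x hx
      have hp' : (pdC 2 p x + Complex.I * pdC 3 p x) / (Real.sqrt 2 : ℂ) = 0 := hpz x hx
      exact algebra1 _ _ _ _ _ _ _ sqrt2C_ne hτ hp'
  · intro x hx; ring
  · intro x hx; ring
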